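/- For every n ≥ 1, the number of 4-dimensional balanced ballot paths of length 4n whose semisymmetric height is at most 6 equals 2^{n-1}. -/

import Mathlib

open scoped Classical

/-- Number of steps among the first `i` steps of `P` equal to basis vector `j`. -/
def cnt (k n : ℕ) (P : Fin (k*n) → Fin k) (j : Fin k) (i : ℕ) : ℕ :=
  (Finset.univ.filter (fun t : Fin (k*n) => (t : ℕ) < i ∧ P t = j)).card

/-- `P` is a `k`-dimensional balanced ballot path of length `k*n`:
each basis vector appears exactly `n` times, and every partial sum is
weakly decreasing in coordinates. -/
def IsBBP (k n : ℕ) (P : Fin (k*n) → Fin k) : Prop :=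
  (∀ j : Fin k, cnt k n P j (k*n) = n) ∧
  (∀ i ≤ k*n, ∀ j j' : Fin k, j ≤ j' → cnt k n P j' i ≤ cnt k n P j i)

/-- Semisymmetric height `g_k` of the `i`-th intermediate point of `P`. -/
def ptHt (k n : ℕ) (P : Fin (k*n) → Fin k) (i : ℕ) : ℤ :=
  ∑ j : Fin k, ((k : ℤ) - 1 - 2*(j : ℕ)) * (cnt k n P j i)

/-- The semisymmetric height of path `P` is at most `u`. -/
def HeightLE (k n : ℕ) (P : Fin (k*n) → Fin k) (u : ℤ) : Prop :=
  ∀ i ≤ k*n, ptHt k n P i ≤ u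

/-- The semisymmetric height of path `P` is exactly `u`. -/
def HeightEq (k n : ℕ) (P : Fin (k*n) → Fin k) (u : ℤ) : Prop :=
  HeightLE k n P u ∧ ∃ i ≤ k*n, ptHt k n P i = u

lemma cnt_zero (k n : ℕ) (P : Fin (k*n) → Fin k) (j : Fin k) : cnt k n P j 0 = 0 := by
  simp [cnt]

lemma cnt_succ (k n : ℕ) (P : Fin (k*n) → Fin k) (j : Fin k) (i : ℕ) (hi : i < k*n) :
    cnt k n P j (i+1) = cnt k n P j i + (if P ⟨i, hi⟩ = j then 1 else 0) := by
  classical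
  have hsplit : (Finset.univ.filter (fun t : Fin (k*n) => (t : ℕ) < i+1 ∧ P t = j)) =
      (Finset.univ.filter (fun t : Fin (k*n) => (t : ℕ) < i ∧ P t = j)) ∪
      (Finset.univ.filter (fun t : Fin (k*n) => (t : ℕ) = i ∧ P t = j)) := by
    ext t
    simp only [Finset.mem_filter, Finset.mem_union, Finset.mem_univ, true_and]
    constructor
    · rintro ⟨h1, h2⟩
      rcases Nat.lt_succ_iff_lt_or_eq.mp h1 with h | h
      · exact Or.inl ⟨h, h2⟩
      · exact Or.inr ⟨h, h2⟩
    · rintro (⟨h1, h2⟩ | ⟨h1, h2⟩) <;> exact ⟨by omega, h2⟩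
  have hdisj : Disjoint (Finset.univ.filter (fun t : Fin (k*n) => (t : ℕ) < i ∧ P t = j))
      (Finset.univ.filter (fun t : Fin (k*n) => (t : ℕ) = i ∧ P t = j)) := by
    rw [Finset.disjoint_left]
    intro t ht ht'
    simp only [Finset.mem_filter] at ht ht'
    omega
  rw [cnt, hsplit, Finset.card_union_of_disjoint hdisj]
  congr 1
  by_cases h : P ⟨i, hi⟩ = j
  · rw [if_pos h]
    have : (Finset.univ.filter (fun t : Fin (k*n) => (t : ℕ) = i ∧ P t = j)) = {⟨i, hi⟩} := by
      ext t
      simp only [Finset.mem_filter, Finset.mem_univ, true_and, Finset.mem_singleton]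
      constructor
      · rintro ⟨h1, _⟩; exact Fin.ext h1
      · rintro rfl; exact ⟨rfl, h⟩
    rw [this]; rfl
  · rw [if_neg h]
    rw [Finset.card_eq_zero, Finset.filter_eq_empty_iff]
    rintro t -
    rintro ⟨h1, h2⟩
    exact h (by rwa [show (⟨i, hi⟩ : Fin (k*n)) = t from (Fin.ext h1.symm)])

lemma ptHt_eq (n : ℕ) (P : Fin (4*n) → Fin 4) (i : ℕ) :
    ptHt 4 n P i = 3*(cnt 4 n P 0 i) + (cnt 4 n P 1 i) - (cnt 4 n P 2 i) - 3*(cnt 4 n P 3 i) := by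
  rw [ptHt, Fin.sum_univ_four]
  have h3 : ((3 : Fin 4) : ℕ) = 3 := rfl
  have h2 : ((2 : Fin 4) : ℕ) = 2 := rfl
  have h1 : ((1 : Fin 4) : ℕ) = 1 := rfl
  have h0 : ((0 : Fin 4) : ℕ) = 0 := rfl
  rw [h0, h1, h2, h3]
  push_cast
  ring

def Cf (ε : ℕ → Bool) (j : Fin 4) (i : ℕ) : ℕ :=
  if i % 4 = 0 then
    (if i = 0 then 0 else
      if (j:ℕ) = 0 then (if ε (i/4 - 1) then i/4 + 1 else i/4)
      else if (j:ℕ) = 3 then (if ε (i/4 - 1) then i/4 - 1 else i/4)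
      else i/4)
  else if (j:ℕ) < i % 4 then i/4 + 1 else i/4

def letterOf (ε : ℕ → Bool) (i : ℕ) : Fin 4 :=
  if i % 4 = 1 then 1 else if i % 4 = 2 then 2
  else if i % 4 = 3 then (if ε (i/4) then 0 else 3)
  else if i = 0 then 0 else (if ε (i/4 - 1) then 3 else 0)

lemma letterVal (ε : ℕ → Bool) (i : ℕ) :
    (letterOf ε i : ℕ) =
      if i % 4 = 1 then 1 else if i % 4 = 2 then 2
      else if i % 4 = 3 then (if ε (i/4) then 0 else 3)
      else if i = 0 then 0 else (if ε (i/4 - 1) then 3 else 0) := by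
  rw [letterOf]
  split_ifs <;> rfl

lemma Cstep (ε : ℕ → Bool) (j : Fin 4) (i : ℕ) :
    Cf ε j (i+1) = Cf ε j i + (if letterOf ε i = j then 1 else 0) := by
  have hj4 : (j:ℕ) < 4 := j.isLt
  have hfi : (if letterOf ε i = j then 1 else 0) =
      (if (letterOf ε i : ℕ) = (j:ℕ) then 1 else 0) := by
    simp [Fin.ext_iff]
  have hr : i % 4 = 0 ∨ i % 4 = 1 ∨ i % 4 = 2 ∨ i % 4 = 3 := by omega
  rw [hfi, letterVal, Cf, Cf]
  rcases hr with h | h | h | h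
  · have h1 : (i+1) % 4 = 1 := by omega
    have h2 : (i+1)/4 = i/4 := by omega
    simp only [h, h1, h2]
    norm_num
    split_ifs <;> omega
  · have h1 : (i+1) % 4 = 2 := by omega
    have h2 : (i+1)/4 = i/4 := by omega
    simp only [h, h1, h2]
    norm_num
    split_ifs <;> omega
  · have h1 : (i+1) % 4 = 3 := by omega
    have h2 : (i+1)/4 = i/4 := by omega
    simp only [h, h1, h2]
    norm_num
    split_ifs <;> omega
  · have h1 : (i+1) % 4 = 0 := by omega
    have h2 : (i+1)/4 = i/4 + 1 := by omega
    have h3 : i/4 + 1 - 1 = i/4 := by omega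
    simp only [h, h1, h2, h3]
    norm_num
    split_ifs <;> omega

lemma Cf_ballot (ε : ℕ → Bool) (i : ℕ) (j j' : Fin 4) (hjj : j ≤ j') :
    Cf ε j' i ≤ Cf ε j i := by
  have h1 : (j:ℕ) ≤ (j':ℕ) := hjj
  have h2 : (j':ℕ) < 4 := j'.isLt
  rw [Cf, Cf]
  split_ifs <;> omega

lemma Cf_height (ε : ℕ → Bool) (i : ℕ) :
    3*((Cf ε 0 i : ℤ)) + (Cf ε 1 i) - (Cf ε 2 i) - 3*(Cf ε 3 i) ≤ 6 := by
  have e0 : ((0 : Fin 4) : ℕ) = 0 := rfl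
  have e1 : ((1 : Fin 4) : ℕ) = 1 := rfl
  have e2 : ((2 : Fin 4) : ℕ) = 2 := rfl
  have e3 : ((3 : Fin 4) : ℕ) = 3 := rfl
  have hm : i % 4 = 0 → i ≠ 0 → 1 ≤ i / 4 := by omega
  simp only [Cf, e0, e1, e2, e3]
  norm_num
  split_ifs <;> push_cast <;> omega

lemma Cf_total (n : ℕ) (hn : 1 ≤ n) (ε : ℕ → Bool) (hε : ε (n-1) = false) (j : Fin 4) :
    Cf ε j (4*n) = n := by
  have h0 : (4*n) % 4 = 0 := by omega
  have h1 : (4*n) ≠ 0 := by omega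
  have h2 : (4*n)/4 = n := by omega
  rw [Cf, if_pos h0, if_neg h1, h2, hε]
  simp

def epsE (n : ℕ) (ε : Fin (n-1) → Bool) (m : ℕ) : Bool :=
  if h : m < n-1 then ε ⟨m, h⟩ else false

def pathOf (n : ℕ) (ε : Fin (n-1) → Bool) : Fin (4*n) → Fin 4 :=
  fun t => letterOf (epsE n ε) t

lemma cnt_letter (n : ℕ) (E : ℕ → Bool) (i : ℕ) (hi : i ≤ 4*n) (j : Fin 4) :
    cnt 4 n (fun t => letterOf E t) j i = Cf E j i := by
  induction i with
  | zero => rw [cnt_zero]; simp [Cf]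
  | succ i ih =>
    have hi' : i < 4*n := by omega
    rw [cnt_succ 4 n _ j i hi', ih (by omega), Cstep]

lemma pathOf_valid (n : ℕ) (hn : 1 ≤ n) (ε : Fin (n-1) → Bool) :
    IsBBP 4 n (pathOf n ε) ∧ HeightLE 4 n (pathOf n ε) 6 := by
  have hc : ∀ i ≤ 4*n, ∀ j, cnt 4 n (pathOf n ε) j i = Cf (epsE n ε) j i :=
    fun i hi j => cnt_letter n (epsE n ε) i hi j
  refine ⟨⟨?_, ?_⟩, ?_⟩
  · intro j
    rw [hc (4*n) le_rfl j]
    exact Cf_total n hn _ (by simp [epsE]) j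
  · intro i hi j j' hjj
    rw [hc i hi, hc i hi]
    exact Cf_ballot _ _ _ _ hjj
  · intro i hi
    rw [ptHt_eq, hc i hi 0, hc i hi 1, hc i hi 2, hc i hi 3]
    exact Cf_height _ i

lemma pathOf_inj (n : ℕ) (hn : 1 ≤ n) : Function.Injective (pathOf n) := by
  intro ε ε' h
  funext m
  have hm : (m:ℕ) < n - 1 := m.isLt
  have ht : 4*(m:ℕ)+3 < 4*n := by omega
  have := congrFun h ⟨4*(m:ℕ)+3, ht⟩
  simp only [pathOf] at this
  have hr : (4*(m:ℕ)+3) % 4 = 3 := by omega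
  have hd : (4*(m:ℕ)+3) / 4 = (m:ℕ) := by omega
  have hE : epsE n ε (m:ℕ) = ε m := by rw [epsE, dif_pos hm]
  have hE' : epsE n ε' (m:ℕ) = ε' m := by rw [epsE, dif_pos hm]
  simp only [letterOf, hr, hd, hE, hE'] at this
  norm_num at this
  cases hb : ε m <;> cases hb' : ε' m <;> rw [hb, hb'] at this <;>
    first | rfl | (exfalso; revert this; decide)

lemma cnt_mono (k n : ℕ) (P : Fin (k*n) → Fin k) (j : Fin k) {i i' : ℕ} (h : i ≤ i') :
    cnt k n P j i ≤ cnt k n P j i' := by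
  apply Finset.card_le_card
  intro t ht
  simp only [Finset.mem_filter] at ht ⊢
  exact ⟨ht.1, by omega, ht.2.2⟩

lemma letter_forced (n : ℕ) (hn : 1 ≤ n) (P : Fin (4*n) → Fin 4)
    (hB : IsBBP 4 n P) (hH : HeightLE 4 n P 6) (E : ℕ → Bool)
    (hE : ∀ m, E m = if h : 4*m+3 < 4*n ∧ m < n-1 then decide (P ⟨4*m+3, h.1⟩ = 0) else false)
    (i : ℕ) (hi : i < 4*n) (h : ∀ j, cnt 4 n P j i = Cf E j i) :
    P ⟨i, hi⟩ = letterOf E i := by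
  have e0 : ((0:Fin 4):ℕ) = 0 := rfl
  have e1 : ((1:Fin 4):ℕ) = 1 := rfl
  have e2 : ((2:Fin 4):ℕ) = 2 := rfl
  have e3 : ((3:Fin 4):ℕ) = 3 := rfl
  set l := P ⟨i, hi⟩ with hl
  have hl4 : (l:ℕ) < 4 := l.isLt
  have hstep : ∀ j : Fin 4, cnt 4 n P j (i+1) = Cf E j i + (if (l:ℕ) = (j:ℕ) then 1 else 0) := by
    intro j
    rw [cnt_succ 4 n P j i hi, h j]
    congr 1
    simp [Fin.ext_iff, hl]
  have hb01 : cnt 4 n P 1 (i+1) ≤ cnt 4 n P 0 (i+1) := hB.2 (i+1) (by omega) 0 1 (by decide)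
  have hb12 : cnt 4 n P 2 (i+1) ≤ cnt 4 n P 1 (i+1) := hB.2 (i+1) (by omega) 1 2 (by decide)
  have hb23 : cnt 4 n P 3 (i+1) ≤ cnt 4 n P 2 (i+1) := hB.2 (i+1) (by omega) 2 3 (by decide)
  have hht : 3*((cnt 4 n P 0 (i+1) : ℤ)) + (cnt 4 n P 1 (i+1)) - (cnt 4 n P 2 (i+1))
      - 3*(cnt 4 n P 3 (i+1)) ≤ 6 := by
    have h6 := hH (i+1) (by omega)
    rw [ptHt_eq] at h6
    exact h6
  simp only [hstep 0, hstep 1, hstep 2, hstep 3, e0, e1, e2, e3] at hb01 hb12 hb23 hht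
  have hr : i % 4 = 0 ∨ i % 4 = 1 ∨ i % 4 = 2 ∨ i % 4 = 3 := by omega
  rcases hr with hri | hri | hri | hri
  · -- r = 0
    have hLt : letterOf E i = if i = 0 then 0 else if E (i/4-1) then 3 else 0 := by
      rw [letterOf, if_neg (by omega), if_neg (by omega), if_neg (by omega)]
    rw [hLt]
    by_cases h0 : i = 0
    · have hcv : ∀ j : Fin 4, Cf E j i = 0 := by
        intro j; rw [Cf, if_pos hri, if_pos h0]
      simp only [hcv] at hb01 hb12 hb23
      rw [if_pos h0]
      split_ifs at hb01 hb12 hb23 <;> (apply Fin.ext; simp only [e0]; omega)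
    · have hm1 : 1 ≤ i/4 := by omega
      by_cases hEb : E (i/4-1) = true
      · have hc0 : Cf E 0 i = i/4+1 := by rw [Cf, if_pos hri, if_neg h0, if_pos (by rw [e0]),
          if_pos hEb]
        have hc1 : Cf E 1 i = i/4 := by rw [Cf, if_pos hri, if_neg h0, if_neg (by rw [e1]; omega),
          if_neg (by rw [e1]; omega)]
        have hc2 : Cf E 2 i = i/4 := by rw [Cf, if_pos hri, if_neg h0, if_neg (by rw [e2]; omega),
          if_neg (by rw [e2]; omega)]
        have hc3 : Cf E 3 i = i/4-1 := by rw [Cf, if_pos hri, if_neg h0, if_neg (by rw [e3]; omega),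
          if_pos (by rw [e3]), if_pos hEb]
        simp only [hc0, hc1, hc2, hc3] at hb01 hb12 hb23 hht
        rw [if_neg h0, if_pos hEb]
        split_ifs at hb01 hb12 hb23 hht <;> (apply Fin.ext; simp only [e3]; omega)
      · have hc0 : Cf E 0 i = i/4 := by rw [Cf, if_pos hri, if_neg h0, if_pos (by rw [e0]),
          if_neg hEb]
        have hc1 : Cf E 1 i = i/4 := by rw [Cf, if_pos hri, if_neg h0, if_neg (by rw [e1]; omega),
          if_neg (by rw [e1]; omega)]
        have hc2 : Cf E 2 i = i/4 := by rw [Cf, if_pos hri, if_neg h0, if_neg (by rw [e2]; omega),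
          if_neg (by rw [e2]; omega)]
        have hc3 : Cf E 3 i = i/4 := by rw [Cf, if_pos hri, if_neg h0, if_neg (by rw [e3]; omega),
          if_pos (by rw [e3]), if_neg hEb]
        simp only [hc0, hc1, hc2, hc3] at hb01 hb12 hb23
        rw [if_neg h0, if_neg hEb]
        split_ifs at hb01 hb12 hb23 <;> (apply Fin.ext; simp only [e0]; omega)
  · -- r = 1
    have hc0 : Cf E 0 i = i/4+1 := by rw [Cf, if_neg (by omega), if_pos (by rw [e0, hri]; omega)]
    have hc1 : Cf E 1 i = i/4 := by rw [Cf, if_neg (by omega), if_neg (by rw [e1, hri]; omega)]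
    have hc2 : Cf E 2 i = i/4 := by rw [Cf, if_neg (by omega), if_neg (by rw [e2, hri]; omega)]
    have hc3 : Cf E 3 i = i/4 := by rw [Cf, if_neg (by omega), if_neg (by rw [e3, hri]; omega)]
    have hLt : letterOf E i = 1 := by rw [letterOf, if_pos hri]
    rw [hLt]
    simp only [hc0, hc1, hc2, hc3] at hb01 hb12 hb23 hht
    have hnot0 : ¬ (l:ℕ) = 0 := by
      intro hl0
      by_cases hend : i+1 = 4*n
      · have t0 := hB.1 0
        have t1 := hB.1 1
        rw [show 4*n = i+1 from hend.symm] at t0 t1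
        simp only [hstep 0, hstep 1, e0, e1, hc0, hc1, hl0] at t0 t1
        norm_num at t0 t1
        omega
      · have hi2 : i+1 < 4*n := by omega
        set l' := P ⟨i+1, hi2⟩ with hl'
        have hl4' : (l':ℕ) < 4 := l'.isLt
        have hstep2 : ∀ j : Fin 4, cnt 4 n P j (i+2) =
            Cf E j i + (if (l:ℕ) = (j:ℕ) then 1 else 0) + (if (l':ℕ) = (j:ℕ) then 1 else 0) := by
          intro j
          rw [show i+2 = (i+1)+1 from rfl, cnt_succ 4 n P j (i+1) hi2, hstep j]
          congr 1
          simp [Fin.ext_iff, hl']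
        have hb01' : cnt 4 n P 1 (i+2) ≤ cnt 4 n P 0 (i+2) := hB.2 (i+2) (by omega) 0 1 (by decide)
        have hb12' : cnt 4 n P 2 (i+2) ≤ cnt 4 n P 1 (i+2) := hB.2 (i+2) (by omega) 1 2 (by decide)
        have hb23' : cnt 4 n P 3 (i+2) ≤ cnt 4 n P 2 (i+2) := hB.2 (i+2) (by omega) 2 3 (by decide)
        have hht' : 3*((cnt 4 n P 0 (i+2) : ℤ)) + (cnt 4 n P 1 (i+2)) - (cnt 4 n P 2 (i+2))
            - 3*(cnt 4 n P 3 (i+2)) ≤ 6 := by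
          have h6 := hH (i+2) (by omega)
          rw [ptHt_eq] at h6
          exact h6
        simp only [hstep2 0, hstep2 1, hstep2 2, hstep2 3, e0, e1, e2, e3,
          hc0, hc1, hc2, hc3, hl0] at hb01' hb12' hb23' hht'
        norm_num at hb01' hb12' hb23' hht'
        split_ifs at hb01' hb12' hb23' hht' <;> omega
    split_ifs at hb01 hb12 hb23 <;> (apply Fin.ext; simp only [e1]; omega)
  · -- r = 2
    have hc0 : Cf E 0 i = i/4+1 := by rw [Cf, if_neg (by omega), if_pos (by rw [e0, hri]; omega)]
    have hc1 : Cf E 1 i = i/4+1 := by rw [Cf, if_neg (by omega), if_pos (by rw [e1, hri]; omega)]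
    have hc2 : Cf E 2 i = i/4 := by rw [Cf, if_neg (by omega), if_neg (by rw [e2, hri]; omega)]
    have hc3 : Cf E 3 i = i/4 := by rw [Cf, if_neg (by omega), if_neg (by rw [e3, hri]; omega)]
    have hLt : letterOf E i = 2 := by rw [letterOf, if_neg (by omega), if_pos hri]
    rw [hLt]
    simp only [hc0, hc1, hc2, hc3] at hb01 hb12 hb23 hht
    split_ifs at hb01 hb12 hb23 hht <;> (apply Fin.ext; simp only [e2]; omega)
  · -- r = 3
    have hc0 : Cf E 0 i = i/4+1 := by rw [Cf, if_neg (by omega), if_pos (by rw [e0, hri]; omega)]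
    have hc1 : Cf E 1 i = i/4+1 := by rw [Cf, if_neg (by omega), if_pos (by rw [e1, hri]; omega)]
    have hc2 : Cf E 2 i = i/4+1 := by rw [Cf, if_neg (by omega), if_pos (by rw [e2, hri]; omega)]
    have hc3 : Cf E 3 i = i/4 := by rw [Cf, if_neg (by omega), if_neg (by rw [e3, hri]; omega)]
    simp only [hc0, hc1, hc2, hc3] at hb01 hb12 hb23 hht
    have him : i = 4*(i/4)+3 := by omega
    have hmn : i/4 ≤ n-1 := by omega
    by_cases hcase : i/4 < n-1
    · have hiv : 4*(i/4)+3 < 4*n := by omega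
      have hEv : E (i/4) = decide (l = 0) := by
        have h1 := hE (i/4)
        rw [dif_pos ⟨hiv, hcase⟩] at h1
        have hie : (⟨4*(i/4)+3, hiv⟩ : Fin (4*n)) = ⟨i, hi⟩ := by
          simp only [Fin.mk.injEq]
          omega
        rw [hie] at h1
        exact h1
      have hLt : letterOf E i = if decide (l = 0) then 0 else 3 := by
        rw [letterOf, if_neg (by omega), if_neg (by omega), if_pos hri, hEv]
      rw [hLt]
      by_cases hl0 : l = 0
      · simp [hl0]
      · rw [decide_eq_false hl0, if_neg (by simp)]
        have hln0 : (l:ℕ) ≠ 0 := fun hc => hl0 (Fin.ext hc)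
        split_ifs at hb01 hb12 hb23 <;> (apply Fin.ext; simp only [e3]; omega)
    · have hLt : letterOf E i = 3 := by
        rw [letterOf, if_neg (by omega), if_neg (by omega), if_pos hri, hE (i/4),
          dif_neg (by push_neg; intro _; omega)]
        simp
      rw [hLt]
      have hmono : cnt 4 n P 0 (i+1) ≤ cnt 4 n P 0 (4*n) := cnt_mono 4 n P 0 (by omega)
      have t0 := hB.1 0
      rw [t0] at hmono
      simp only [hstep 0, e0, hc0] at hmono
      split_ifs at hb01 hb12 hb23 hmono <;> (apply Fin.ext; simp only [e3]; omega)

lemma cnt_all (n : ℕ) (hn : 1 ≤ n) (P : Fin (4*n) → Fin 4)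
    (hB : IsBBP 4 n P) (hH : HeightLE 4 n P 6) (E : ℕ → Bool)
    (hE : ∀ m, E m = if h : 4*m+3 < 4*n ∧ m < n-1 then decide (P ⟨4*m+3, h.1⟩ = 0) else false) :
    ∀ i ≤ 4*n, ∀ j, cnt 4 n P j i = Cf E j i := by
  intro i
  induction i with
  | zero => intro _ j; rw [cnt_zero]; simp [Cf]
  | succ i ih =>
    intro hi j
    have hi' : i < 4*n := by omega
    have hl := letter_forced n hn P hB hH E hE i hi' (ih (by omega))
    rw [cnt_succ 4 n P j i hi', ih (by omega) j, Cstep, hl]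

lemma pathOf_surj (n : ℕ) (hn : 1 ≤ n) (P : Fin (4*n) → Fin 4)
    (hB : IsBBP 4 n P) (hH : HeightLE 4 n P 6) :
    ∃ ε : Fin (n-1) → Bool, pathOf n ε = P := by
  refine ⟨fun m => decide (P ⟨4*(m:ℕ)+3, by have := m.isLt; omega⟩ = 0), ?_⟩
  set ε : Fin (n-1) → Bool := fun m => decide (P ⟨4*(m:ℕ)+3, by have := m.isLt; omega⟩ = 0) with hε
  have hE : ∀ m, epsE n ε m =
      if h : 4*m+3 < 4*n ∧ m < n-1 then decide (P ⟨4*m+3, h.1⟩ = 0) else false := by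
    intro m
    by_cases hm : m < n-1
    · rw [epsE, dif_pos hm, dif_pos ⟨by omega, hm⟩]
    · rw [epsE, dif_neg hm, dif_neg (by push_neg; intro _; omega)]
  have hc := cnt_all n hn P hB hH (epsE n ε) hE
  funext t
  have ht : (t:ℕ) < 4*n := t.isLt
  have := letter_forced n hn P hB hH (epsE n ε) hE (t:ℕ) ht (hc (t:ℕ) (by omega))
  rw [pathOf]
  rw [← this]


theorem stmt11 (n : ℕ) (hn : 1 ≤ n) :
    Nat.card {P : Fin (4*n) → Fin 4 // IsBBP 4 n P ∧ HeightLE 4 n P 6} = 2^(n-1) := by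
  have hbij : Function.Bijective
      (fun ε : Fin (n-1) → Bool =>
        (⟨pathOf n ε, pathOf_valid n hn ε⟩ :
          {P : Fin (4*n) → Fin 4 // IsBBP 4 n P ∧ HeightLE 4 n P 6})) := by
    constructor
    · intro ε ε' hee
      exact pathOf_inj n hn (congrArg Subtype.val hee)
    · rintro ⟨P, hP1, hP2⟩
      obtain ⟨ε, hε⟩ := pathOf_surj n hn P hP1 hP2
      exact ⟨ε, Subtype.ext hε⟩
  rw [← Nat.card_eq_of_bijective _ hbij]
  simp [Nat.card_eq_fintype_card]
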